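/- For every integer n ≥ 1 the following two inclusions of two-sided ideals of B hold: (i) ⟨Jⁿ⟩ + Iⁿ ⊆ (⟨J⟩ + I)ⁿ, and (ii) (⟨J⟩ + I)^(2(n²+n−1)) ⊆ ⟨Jⁿ⟩ + Iⁿ. In other words, the decreasing filtration (⟨Jⁿ⟩ + Iⁿ)_{n≥1} of B and the decreasing filtration ((⟨J⟩ + I)ⁿ)_{n≥1} of B are interleaved (each term of one filtration contains a term of the other), which expresses the isomorphism of pro-rings B/(⟨Jⁿ⟩+Iⁿ)^∞ ≅ B/(⟨J⟩+I)^∞ of Lemma 3.7. -/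

import Mathlib

/-- The `n`-th power of a subset `U` of a ring `B`: the additive subgroup generated by
all products `u₁ ⋯ uₙ` of `n` elements of `U`. -/
def setPow {B : Type*} [Ring B] (U : Set B) (n : ℕ) : AddSubgroup B :=
  AddSubgroup.closure {x | ∃ l : List B, l.length = n ∧ (∀ y ∈ l, y ∈ U) ∧ x = l.prod}


namespace Interleave

variable {B : Type*} [Ring B]

lemma list_prod_mem_setPow {U : Set B} {l : List B} {n : ℕ} (hlen : l.length = n)
    (hmem : ∀ y ∈ l, y ∈ U) : l.prod ∈ setPow U n :=
  AddSubgroup.subset_closure ⟨l, hlen, hmem, rfl⟩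

lemma setPow_mono {U V : Set B} (h : U ⊆ V) (n : ℕ) : setPow U n ≤ setPow V n :=
  AddSubgroup.closure_mono (by rintro x ⟨l, h1, h2, h3⟩; exact ⟨l, h1, fun y hy => h (h2 y hy), h3⟩)

lemma mul_mem_setPow_left {U : Set B} (hU : ∀ (b : B) {u : B}, u ∈ U → b * u ∈ U) {m : ℕ}
    (b : B) {x : B} (hx : x ∈ setPow U (m + 1)) : b * x ∈ setPow U (m + 1) := by
  induction hx using AddSubgroup.closure_induction with
  | mem x hx =>
    obtain ⟨l, hlen, hmem, rfl⟩ := hx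
    cases l with
    | nil => simp at hlen
    | cons h t =>
      rw [List.prod_cons, ← mul_assoc]
      refine list_prod_mem_setPow (l := (b * h) :: t) (by simpa using hlen) ?_
      intro y hy
      rcases List.mem_cons.mp hy with rfl | hy
      · exact hU b (hmem h (List.mem_cons_self))
      · exact hmem y (List.mem_cons_of_mem _ hy)
  | zero => simpa using (setPow U (m + 1)).zero_mem
  | add x y _ _ hx hy => rw [mul_add]; exact add_mem hx hy
  | neg x _ hx => rw [mul_neg]; exact neg_mem hx

lemma mul_mem_setPow_right {U : Set B} (hU : ∀ (b : B) {u : B}, u ∈ U → u * b ∈ U) {m : ℕ}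
    (b : B) {x : B} (hx : x ∈ setPow U (m + 1)) : x * b ∈ setPow U (m + 1) := by
  induction hx using AddSubgroup.closure_induction with
  | mem x hx =>
    obtain ⟨l, hlen, hmem, rfl⟩ := hx
    rcases List.eq_nil_or_concat l with rfl | ⟨L, a, rfl⟩
    · simp at hlen
    · rw [List.concat_eq_append] at hlen hmem ⊢
      have hmem' : ∀ y ∈ L ++ [a * b], y ∈ U := by
        intro y hy
        rcases List.mem_append.mp hy with hy | hy
        · exact hmem y (List.mem_append.mpr (Or.inl hy))
        · rcases List.mem_singleton.mp hy with rfl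
          exact hU b (hmem a (List.mem_append.mpr (Or.inr (List.mem_singleton.mpr rfl))))
      have := list_prod_mem_setPow (l := L ++ [a * b]) (n := m + 1)
        (by simp at hlen ⊢; omega) hmem'
      simpa [List.prod_append, mul_assoc] using this
  | zero => simpa using (setPow U (m + 1)).zero_mem
  | add x y _ _ hx hy => rw [add_mul]; exact add_mem hx hy
  | neg x _ hx => rw [neg_mul]; exact neg_mem hx

lemma mem_mul_setPow {U : Set B} {i : B} (hi : i ∈ U) {m : ℕ} {x : B}
    (hx : x ∈ setPow U m) : i * x ∈ setPow U (m + 1) := by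
  induction hx using AddSubgroup.closure_induction with
  | mem x hx =>
    obtain ⟨l, hlen, hmem, rfl⟩ := hx
    rw [← List.prod_cons]
    refine list_prod_mem_setPow (l := i :: l) (by simpa using hlen) ?_
    intro y hy
    rcases List.mem_cons.mp hy with rfl | hy
    · exact hi
    · exact hmem y hy
  | zero => simpa using (setPow U (m + 1)).zero_mem
  | add x y _ _ hx hy => rw [mul_add]; exact add_mem hx hy
  | neg x _ hx => rw [mul_neg]; exact neg_mem hx

/-- absorption: if a list has at least `m+1` entries in a two-sided-absorbing set `U`,
then any left multiple of its product lies in `setPow U (m+1)`. -/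
lemma absorb {U : Set B} (hUl : ∀ (b : B) {u : B}, u ∈ U → b * u ∈ U)
    (hUr : ∀ (b : B) {u : B}, u ∈ U → u * b ∈ U) (p : B → Bool)
    (hp : ∀ y, p y = true → y ∈ U) :
    ∀ (l : List B) (m : ℕ) (x : B), m + 1 ≤ l.countP p → x * l.prod ∈ setPow U (m + 1) := by
  intro l
  induction l with
  | nil => intro m x h; simp at h
  | cons h t ih =>
    intro m x hcount
    rw [List.prod_cons, ← mul_assoc]
    by_cases hb : p h = true
    · have hhU : h ∈ U := hp h hb
      have hxh : x * h ∈ U := hUl x hhU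
      cases m with
      | zero =>
        have hmem : x * h * t.prod ∈ U := hUr t.prod hxh
        have := list_prod_mem_setPow (l := [x * h * t.prod]) (n := 1) rfl
          (by intro y hy; rcases List.mem_singleton.mp hy with rfl; exact hmem)
        simpa using this
      | succ m' =>
        have hc : m' + 1 ≤ t.countP p := by
          rw [List.countP_cons, if_pos hb] at hcount; omega
        have h1 : (1 : B) * t.prod ∈ setPow U (m' + 1) := ih m' 1 hc
        rw [one_mul] at h1
        exact mem_mul_setPow hxh h1
    · have : m + 1 ≤ t.countP p := by
        rw [List.countP_cons, if_neg (by simpa using hb)] at hcount; simpa using hcount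
      exact ih m (x * h) this

section Run
variable {α : Type*}

lemma split_at_first_true (p : α → Bool) :
    ∀ l : List α, (∀ y ∈ l, p y = false) ∨
      ∃ u x v, l = u ++ x :: v ∧ (∀ y ∈ u, p y = false) ∧ p x = true := by
  intro l
  induction l with
  | nil => exact Or.inl (by simp)
  | cons h t ih =>
    by_cases hh : p h = true
    · exact Or.inr ⟨[], h, t, by simp, by simp, hh⟩
    · have hh' : p h = false := by simpa using hh
      rcases ih with hall | ⟨u, x, v, rfl, hu, hx⟩
      · refine Or.inl ?_
        intro y hy
        rcases List.mem_cons.mp hy with rfl | hy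
        · exact hh'
        · exact hall y hy
      · refine Or.inr ⟨h :: u, x, v, by simp, ?_, hx⟩
        intro y hy
        rcases List.mem_cons.mp hy with rfl | hy
        · exact hh'
        · exact hu y hy

lemma run_lemma (p : α → Bool) (n : ℕ) :
    ∀ (k : ℕ) (l : List α), l.countP p ≤ k → (k + 1) * n + k ≤ l.length →
      ∃ l₁ l₂ l₃ : List α, l = l₁ ++ l₂ ++ l₃ ∧ l₂.length = n ∧ ∀ y ∈ l₂, p y = false := by
  intro k
  induction k with
  | zero =>
    intro l hcount hlen
    have hall : ∀ y ∈ l, p y = false := by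
      have h0 : l.countP p = 0 := Nat.le_zero.mp hcount
      intro y hy
      have := (List.countP_eq_zero.mp h0) y hy
      simpa using this
    have hn : n ≤ l.length := by omega
    refine ⟨[], l.take n, l.drop n, by simp, by simp [hn], ?_⟩
    intro y hy
    exact hall y (List.take_subset n l hy)
  | succ k ih =>
    intro l hcount hlen
    rcases split_at_first_true p l with hall | ⟨u, x, v, rfl, hu, hx⟩
    · have hn : n ≤ l.length := by
        have h1 : n ≤ (k + 1 + 1) * n := Nat.le_mul_of_pos_left n (by omega)
        omega
      refine ⟨[], l.take n, l.drop n, by simp, by simp [hn], ?_⟩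
      intro y hy
      exact hall y (List.take_subset n l hy)
    · by_cases hun : n ≤ u.length
      · refine ⟨[], u.take n, u.drop n ++ x :: v, ?_, by simp [hun], ?_⟩
        · conv_lhs => rw [← List.take_append_drop n u]
          rw [List.append_assoc, List.nil_append]
        · intro y hy
          exact hu y (List.take_subset n u hy)
      · have hcu : u.countP p = 0 := List.countP_eq_zero.mpr (by
          intro y hy; simp [hu y hy])
        have hcv : v.countP p ≤ k := by
          rw [List.countP_append, List.countP_cons, hcu, if_pos hx] at hcount
          omega
        have hlenv : (k + 1) * n + k ≤ v.length := by
          have hlu : (u ++ x :: v).length = u.length + v.length + 1 := by simp; omega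
          have hexp : (k + 1 + 1) * n = (k + 1) * n + n := by ring
          rw [hexp] at hlen
          omega
        obtain ⟨l₁, l₂, l₃, rfl, hl2, hfalse⟩ := ih v hcv hlenv
        exact ⟨u ++ x :: l₁, l₂, l₃, by simp, hl2, hfalse⟩
end Run

section Main

variable {B : Type*} [Ring B]

/-- coercion of a product of a list in a subring -/
lemma coe_list_prod (A : Subring B) (la : List A) :
    (la.map (fun a : A => (a : B))).prod = ((la.prod : A) : B) := by
  induction la with
  | nil => simp
  | cons h t ih => simp [ih]

variable (A : Subring B) (ε : B →+* A) (J : TwoSidedIdeal A) (n : ℕ)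

/-- The target additive subgroup `⟨Jⁿ⟩ + Iⁿ`. -/
def TGT : AddSubgroup B :=
  AddSubgroup.closure
      ((TwoSidedIdeal.span ((↑) '' (setPow (J : Set A) n : Set A)) : TwoSidedIdeal B) : Set B) ⊔
    setPow {b : B | ε b = 0} n

/-- The set `⟨J⟩ + I`. -/
def SSET : Set B :=
  {x : B | ∃ a ∈ TwoSidedIdeal.span ((↑) '' (J : Set A)), ∃ b, ε b = 0 ∧ x = a + b}

def ISET : Set B := {b : B | ε b = 0}

def JC : Set B := (↑) '' (J : Set A)

variable {A ε J n}

lemma iset_mul_left : ∀ (b : B) {u : B}, u ∈ ISET A ε → b * u ∈ ISET A ε := by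
  intro b u hu
  show ε (b * u) = 0
  rw [map_mul, hu, mul_zero]

lemma iset_mul_right : ∀ (b : B) {u : B}, u ∈ ISET A ε → u * b ∈ ISET A ε := by
  intro b u hu
  show ε (u * b) = 0
  rw [map_mul, hu, zero_mul]

lemma exists_lift : ∀ l : List B, (∀ y ∈ l, y ∈ JC A J) →
    ∃ la : List A, (∀ j ∈ la, j ∈ J) ∧ la.map (fun a : A => (a : B)) = l := by
  intro l
  induction l with
  | nil => exact fun _ => ⟨[], by simp, rfl⟩
  | cons h t ih =>
    intro hl
    obtain ⟨j, hj, rfl⟩ := hl h (List.mem_cons_self)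
    obtain ⟨la, hla, rfl⟩ := ih (fun y hy => hl y (List.mem_cons_of_mem _ hy))
    refine ⟨j :: la, ?_, by simp⟩
    intro j' hj'
    rcases List.mem_cons.mp hj' with rfl | hj'
    · exact hj
    · exact hla j' hj'

open scoped Classical in
lemma pure_lemma (hn : 1 ≤ n) :
    ∀ w : List B, n * n + n ≤ w.length + 1 →
      (∀ y ∈ w, y ∈ JC A J ∪ ISET A ε) → w.prod ∈ TGT A ε J n := by
  obtain ⟨m, rfl⟩ : ∃ m, n = m + 1 := ⟨n - 1, by omega⟩
  intro w hwlen hw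
  set p : B → Bool := fun y => decide (y ∈ ISET A ε) with hp
  by_cases hc : m + 1 ≤ w.countP p
  · -- at least n letters in I : absorb into Iⁿ
    have habs := absorb (iset_mul_left (A := A) (ε := ε)) (iset_mul_right (A := A) (ε := ε)) p
      (fun y hy => of_decide_eq_true hy) w m 1 hc
    rw [one_mul] at habs
    exact AddSubgroup.mem_sup_right habs
  · -- at most n - 1 letters in I : find a run of n letters in J
    have hcount : w.countP p ≤ m := by omega
    have hrunlen : (m + 1) * (m + 1) + m ≤ w.length := by
      have hq : (m + 1) * (m + 1) + (m + 1) ≤ w.length + 1 := hwlen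
      generalize (m + 1) * (m + 1) = q at hq ⊢
      omega
    obtain ⟨l₁, l₂, l₃, rfl, hl2, hfalse⟩ := run_lemma p (m + 1) m w hcount hrunlen
    have hl2J : ∀ y ∈ l₂, y ∈ JC A J := by
      intro y hy
      have hyw : y ∈ l₁ ++ l₂ ++ l₃ := by simp [hy]
      rcases hw y hyw with h | h
      · exact h
      · exact absurd h (by simpa [hp] using hfalse y hy)
    obtain ⟨la, hla, hmap⟩ := exists_lift l₂ hl2J
    have hlaprod : la.prod ∈ setPow (J : Set A) (m + 1) :=
      list_prod_mem_setPow (by rw [← hl2, ← hmap, List.length_map]) hla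
    have himg : l₂.prod ∈ ((↑) '' (setPow (J : Set A) (m + 1) : Set A) : Set B) :=
      ⟨la.prod, hlaprod, by rw [← hmap, coe_list_prod]⟩
    have hspan : l₂.prod ∈
        (TwoSidedIdeal.span ((↑) '' (setPow (J : Set A) (m + 1) : Set A)) : TwoSidedIdeal B) :=
      TwoSidedIdeal.subset_span himg
    have hprod : (l₁ ++ l₂ ++ l₃).prod = l₁.prod * l₂.prod * l₃.prod := by
      rw [List.prod_append, List.prod_append]
    rw [hprod]
    refine AddSubgroup.mem_sup_left (AddSubgroup.subset_closure ?_)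
    exact TwoSidedIdeal.mul_mem_right _ _ _ (TwoSidedIdeal.mul_mem_left _ _ _ hspan)

open Pointwise in
lemma expand_lemma (hε : ∀ a : A, ε ((a : A) : B) = a) (m : ℕ)
    (H : ∀ w : List B, m ≤ w.length → (∀ y ∈ w, y ∈ JC A J ∪ ISET A ε) → w.prod ∈ TGT A ε J n) :
    ∀ l : List B, (∀ y ∈ l, y ∈ SSET A ε J) →
      ∀ pre : List B, (∀ y ∈ pre, y ∈ JC A J ∪ ISET A ε) → m ≤ pre.length + l.length →
        pre.prod * l.prod ∈ TGT A ε J n := by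
  intro l
  induction l with
  | nil =>
    intro _ pre hpre hlen
    rw [List.prod_nil, mul_one]
    exact H pre (by simpa using hlen) hpre
  | cons h t ih =>
    intro hl pre hpre hlen
    have hlt : ∀ y ∈ t, y ∈ SSET A ε J := fun y hy => hl y (List.mem_cons_of_mem _ hy)
    have hlen' : m ≤ pre.length + t.length + 1 := by
      simpa [Nat.add_assoc] using hlen
    obtain ⟨a, ha, b, hb, rfl⟩ := hl h (List.mem_cons_self)
    clear hl hlen
    -- key : products over one-step-extended prefixes
    have key : ∀ w : List B, (∀ y ∈ w, y ∈ JC A J ∪ ISET A ε) → 1 ≤ w.length →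
        ∀ e : B, w.prod = e → pre.prod * (e * t.prod) ∈ TGT A ε J n := by
      intro w hw hw1 e he
      have heq : pre.prod * (e * t.prod) = (pre ++ w).prod * t.prod := by
        rw [List.prod_append, he, mul_assoc]
      rw [heq]
      refine ih hlt (pre ++ w) ?_ ?_
      · intro y hy
        rcases List.mem_append.mp hy with hy | hy
        · exact hpre y hy
        · exact hw y hy
      · rw [List.length_append]
        omega
    rw [List.prod_cons, add_mul, mul_add]
    refine add_mem ?_ ?_
    · -- the part with a ∈ ⟨J⟩
      rw [TwoSidedIdeal.mem_span_iff_mem_addSubgroup_closure] at ha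
      induction ha using AddSubgroup.closure_induction with
      | mem x hx =>
        rw [Set.mem_mul] at hx
        obtain ⟨y, hy, d, -, rfl⟩ := hx
        rw [Set.mem_mul] at hy
        obtain ⟨c, -, w0, hw0, rfl⟩ := hy
        obtain ⟨j, hj, rfl⟩ := hw0
        obtain ⟨a1, c0, hc0, rfl⟩ : ∃ (a1 : A) (c0 : B), ε c0 = 0 ∧ c = ↑a1 + c0 :=
          ⟨ε c, c - ↑(ε c), by rw [map_sub, hε, sub_self], by abel⟩
        obtain ⟨d1, d0, hd0, rfl⟩ : ∃ (d1 : A) (d0 : B), ε d0 = 0 ∧ d = ↑d1 + d0 :=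
          ⟨ε d, d - ↑(ε d), by rw [map_sub, hε, sub_self], by abel⟩
        have hjc1 : ((a1 * j * d1 : A) : B) ∈ JC A J :=
          ⟨a1 * j * d1, J.mul_mem_right _ _ (J.mul_mem_left _ _ hj), rfl⟩
        have hjc2 : ((a1 * j : A) : B) ∈ JC A J :=
          ⟨a1 * j, J.mul_mem_left _ _ hj, rfl⟩
        have hjc3 : ((j * d1 : A) : B) ∈ JC A J :=
          ⟨j * d1, J.mul_mem_right _ _ hj, rfl⟩
        have hjc4 : ((j : A) : B) ∈ JC A J := ⟨j, hj, rfl⟩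
        have k1 := key [((a1 * j * d1 : A) : B)]
          (by intro y hy; rcases List.mem_singleton.mp hy with rfl; exact Or.inl hjc1) (by simp)
          ((a1 * j * d1 : A) : B) (by simp)
        have k2 := key [((a1 * j : A) : B), d0] (by
            intro y hy
            rcases List.mem_cons.mp hy with rfl | hy
            · exact Or.inl hjc2
            · rcases List.mem_singleton.mp hy with rfl
              exact Or.inr hd0) (by simp)
          (((a1 * j : A) : B) * d0) (by simp)
        have k3 := key [c0, ((j * d1 : A) : B)] (by
            intro y hy
            rcases List.mem_cons.mp hy with rfl | hy
            · exact Or.inr hc0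
            · rcases List.mem_singleton.mp hy with rfl
              exact Or.inl hjc3) (by simp)
          (c0 * ((j * d1 : A) : B)) (by simp)
        have k4 := key [c0, ((j : A) : B), d0] (by
            intro y hy
            rcases List.mem_cons.mp hy with rfl | hy
            · exact Or.inr hc0
            rcases List.mem_cons.mp hy with rfl | hy
            · exact Or.inl hjc4
            rcases List.mem_singleton.mp hy with rfl
            exact Or.inr hd0) (by simp)
          (c0 * (((j : A) : B) * d0)) (by simp [mul_assoc])
        have hx : (↑a1 + c0) * ↑j * (↑d1 + d0) =
            ((a1 * j * d1 : A) : B) + ((a1 * j : A) : B) * d0 +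
              c0 * ((j * d1 : A) : B) + c0 * (((j : A) : B) * d0) := by
          push_cast
          noncomm_ring
        rw [hx]
        have hdist : pre.prod *
            ((((a1 * j * d1 : A) : B) + ((a1 * j : A) : B) * d0 +
              c0 * ((j * d1 : A) : B) + c0 * (((j : A) : B) * d0)) * t.prod) =
            pre.prod * (((a1 * j * d1 : A) : B) * t.prod) +
              pre.prod * ((((a1 * j : A) : B) * d0) * t.prod) +
              pre.prod * ((c0 * ((j * d1 : A) : B)) * t.prod) +
              pre.prod * ((c0 * (((j : A) : B) * d0)) * t.prod) := by
          noncomm_ring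
        rw [hdist]
        exact add_mem (add_mem (add_mem k1 k2) k3) k4
      | zero =>
        simpa using (TGT A ε J n).zero_mem
      | add x y _ _ hx hy =>
        rw [add_mul, mul_add]
        exact add_mem hx hy
      | neg x _ hx =>
        rw [neg_mul, mul_neg]
        exact neg_mem hx
    · -- the part with b ∈ I
      exact key [b] (by simp [ISET, hb]) (by simp) b (by simp)

lemma part_i (hn : 1 ≤ n) : TGT A ε J n ≤ setPow (SSET A ε J) n := by
  obtain ⟨m, rfl⟩ : ∃ m, n = m + 1 := ⟨n - 1, by omega⟩
  refine sup_le ?_ ?_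
  · rw [AddSubgroup.closure_le]
    intro x hx
    rw [SetLike.mem_coe] at hx
    have hSl : ∀ (b : B) {u : B}, u ∈ SSET A ε J → b * u ∈ SSET A ε J := by
      rintro b u ⟨a, ha, i, hi, rfl⟩
      exact ⟨b * a, TwoSidedIdeal.mul_mem_left _ _ _ ha, b * i,
        by rw [map_mul, hi, mul_zero], by rw [mul_add]⟩
    have hSr : ∀ (b : B) {u : B}, u ∈ SSET A ε J → u * b ∈ SSET A ε J := by
      rintro b u ⟨a, ha, i, hi, rfl⟩
      exact ⟨a * b, TwoSidedIdeal.mul_mem_right _ _ _ ha, i * b,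
        by rw [map_mul, hi, zero_mul], by rw [add_mul]⟩
    let T₂ : TwoSidedIdeal B := TwoSidedIdeal.mk' (setPow (SSET A ε J) (m + 1) : Set B)
      (zero_mem _) (fun hx hy => add_mem hx hy) (fun hx => neg_mem hx)
      (fun {c y} hy => mul_mem_setPow_left hSl c hy)
      (fun {y c} hy => mul_mem_setPow_right hSr c hy)
    have hgen : ((↑) '' (setPow (J : Set A) (m + 1) : Set A) : Set B) ⊆ (T₂ : Set B) := by
      rintro z ⟨xA, hxA, rfl⟩
      rw [SetLike.mem_coe, TwoSidedIdeal.mem_mk']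
      induction hxA using AddSubgroup.closure_induction with
      | mem x hx =>
        obtain ⟨la, hlalen, hlamem, rfl⟩ := hx
        rw [SetLike.mem_coe, ← coe_list_prod]
        refine list_prod_mem_setPow (by simpa using hlalen) ?_
        intro y hy
        rw [List.mem_map] at hy
        obtain ⟨jA, hjA, rfl⟩ := hy
        exact ⟨(jA : B), TwoSidedIdeal.subset_span ⟨jA, hlamem jA hjA, rfl⟩, 0,
          map_zero ε, (add_zero _).symm⟩
      | zero =>
        rw [SetLike.mem_coe]
        push_cast
        exact zero_mem _
      | add x y _ _ hx hy =>
        rw [SetLike.mem_coe] at hx hy ⊢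
        push_cast
        exact add_mem hx hy
      | neg x _ hx =>
        rw [SetLike.mem_coe] at hx ⊢
        push_cast
        exact neg_mem hx
    have hmem := TwoSidedIdeal.mem_span_iff.mp hx T₂ hgen
    rwa [TwoSidedIdeal.mem_mk', SetLike.mem_coe] at hmem
  · refine setPow_mono ?_ _
    intro b hb
    exact ⟨0, zero_mem _, b, hb, (zero_add _).symm⟩

lemma part_ii (hε : ∀ a : A, ε ((a : A) : B) = a) (hn : 1 ≤ n) :
    setPow (SSET A ε J) (2 * (n ^ 2 + n - 1)) ≤ TGT A ε J n := by
  refine (AddSubgroup.closure_le _).mpr ?_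
  rintro x ⟨l, hlen, hmem, rfl⟩
  have H : ∀ w : List B, 2 * (n ^ 2 + n - 1) ≤ w.length →
      (∀ y ∈ w, y ∈ JC A J ∪ ISET A ε) → w.prod ∈ TGT A ε J n := by
    intro w hw hw2
    refine pure_lemma hn w ?_ hw2
    have hnn : 1 * 1 ≤ n * n := Nat.mul_le_mul hn hn
    rw [pow_two] at hw
    generalize hq : n * n = q at hw hnn ⊢
    omega
  have := expand_lemma hε (2 * (n ^ 2 + n - 1)) H l hmem [] (by simp) (by simp [hlen])
  simpa using this

end Main
end Interleave

/-- Let `B` be a ring, `A ⊆ B` a subring, `ε : B → A` a ring homomorphism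
restricting to the identity on `A`, `I = ker ε` and `J` a two-sided ideal of `A`.
Then for every `n ≥ 1`:
(i)  `⟨Jⁿ⟩ + Iⁿ ⊆ (⟨J⟩ + I)ⁿ`, and
(ii) `(⟨J⟩ + I)^(2(n² + n − 1)) ⊆ ⟨Jⁿ⟩ + Iⁿ`;
i.e. the filtrations `(⟨Jⁿ⟩ + Iⁿ)ₙ` and `((⟨J⟩ + I)ⁿ)ₙ` are interleaved, which expresses the
pro-ring isomorphism `B/(⟨Jⁿ⟩+Iⁿ)^∞ ≅ B/(⟨J⟩+I)^∞` of Lemma 3.7. -/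
theorem filtration_interleaving {B : Type*} [Ring B] (A : Subring B) (ε : B →+* A)
    (hε : ∀ a : A, ε (a : B) = a) (J : TwoSidedIdeal A) (n : ℕ) (hn : 1 ≤ n) :
    AddSubgroup.closure
        ((TwoSidedIdeal.span ((↑) '' (setPow (J : Set A) n : Set A)) : TwoSidedIdeal B) : Set B) ⊔
        setPow {b : B | ε b = 0} n ≤
      setPow {x : B | ∃ a ∈ TwoSidedIdeal.span ((↑) '' (J : Set A)),
        ∃ b, ε b = 0 ∧ x = a + b} n
    ∧
    setPow {x : B | ∃ a ∈ TwoSidedIdeal.span ((↑) '' (J : Set A)),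
        ∃ b, ε b = 0 ∧ x = a + b} (2 * (n ^ 2 + n - 1)) ≤
      AddSubgroup.closure
        ((TwoSidedIdeal.span ((↑) '' (setPow (J : Set A) n : Set A)) : TwoSidedIdeal B) : Set B) ⊔
        setPow {b : B | ε b = 0} n := by
  exact ⟨Interleave.part_i hn, Interleave.part_ii hε hn⟩
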